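/- Let p ≥ 1 and 1 ≤ q ≤ p be integers, let f_ref, f_k, f_{k+1} be real numbers, let D ≥ 0 be a real number (representing Δ_p(x_k)), and let κ > 0, ζ > 0. Suppose that D^q ≥ κ(f_k − f_ref) ≥ 0 but D^{q+1} < κ(f_k − f_ref) (i.e., x_k lies in subregion R_p^q), and that f_k − f_{k+1} ≥ D^{p+1}/ζ. Then κ(f_k − f_ref) < 1, and the objective gap decreases at a sublinear rate: f_{k+1} − f_ref ≤ (1 − (κ^{(p+1)/q}/ζ)·(f_k − f_ref)^{(p+1−q)/q})(f_k − f_ref). -/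

import Mathlib

/-- Theorem 6.2(b): sublinear decrease of the objective gap in subregion `R_p^q`
for `1 ≤ q ≤ p`. -/
theorem rc_regionp_subq_sublinear
    (p q : ℕ) (hp : 1 ≤ p) (hq1 : 1 ≤ q) (hqp : q ≤ p)
    (f_ref f_k f_k1 D κ ζ : ℝ)
    (hD : 0 ≤ D) (hκ : 0 < κ) (hζ : 0 < ζ)
    (h1 : D ^ q ≥ κ * (f_k - f_ref)) (h2 : κ * (f_k - f_ref) ≥ 0)
    (h3 : D ^ (q + 1) < κ * (f_k - f_ref))
    (hdec : f_k - f_k1 ≥ D ^ (p + 1) / ζ) :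
    κ * (f_k - f_ref) < 1 ∧
      f_k1 - f_ref ≤
        (1 - κ ^ (((p : ℝ) + 1) / q) / ζ *
            (f_k - f_ref) ^ (((p : ℝ) + 1 - q) / q)) * (f_k - f_ref) := by
  set G := f_k - f_ref with hG
  have hDpos : 0 < D := by
    rcases hD.lt_or_eq with h | h
    · exact h
    · exfalso
      have : D ^ (q + 1) = 0 := by rw [← h]; simp
      have hq' : q ≠ 0 := by omega
      nlinarith [pow_nonneg hD q, h1, h3, (by rw [← h]; exact zero_pow hq' : D ^ q = (0:ℝ))]
  have hDq : 0 < D ^ q := pow_pos hDpos q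
  have hD1 : D < 1 := by
    by_contra h
    push_neg at h
    have : D ^ q ≤ D ^ (q + 1) := pow_le_pow_right₀ h (by omega)
    linarith
  have hκG1 : κ * G < 1 := lt_of_le_of_lt h1 (pow_lt_one₀ hD hD1 (by omega))
  refine ⟨hκG1, ?_⟩
  have hGpos : 0 < G := by
    rcases lt_or_ge 0 G with h | h
    · exact h
    · exfalso
      have : κ * G ≤ 0 := mul_nonpos_of_nonneg_of_nonpos hκ.le h
      nlinarith [pow_nonneg hD (q + 1)]
  have hq0 : (q : ℝ) ≠ 0 := by positivity
  set a : ℝ := ((p : ℝ) + 1) / q with ha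
  have ha0 : 0 ≤ a := by positivity
  -- (κ G)^a ≤ (D^q)^a = D^(p+1)
  have hκG0 : 0 ≤ κ * G := h2
  have key : (κ * G) ^ a ≤ D ^ (p + 1) := by
    have h4 : (κ * G) ^ a ≤ (D ^ q) ^ a :=
      Real.rpow_le_rpow hκG0 h1 ha0
    have h5 : (D ^ q : ℝ) ^ a = D ^ (p + 1 : ℕ) := by
      rw [← Real.rpow_natCast D q, ← Real.rpow_mul hD, ← Real.rpow_natCast D (p + 1)]
      congr 1
      field_simp [ha]
      rw [ha, mul_comm, div_mul_cancel₀ _ hq0]; push_cast; ring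
    rwa [h5] at h4
  have hsplit : (κ * G) ^ a = κ ^ a * (G ^ (((p : ℝ) + 1 - q) / q) * G) := by
    rw [Real.mul_rpow hκ.le hGpos.le]
    congr 1
    have : a = ((p : ℝ) + 1 - q) / q + 1 := by field_simp [ha]; rw [ha, div_mul_cancel₀ _ hq0]; ring
    rw [this, Real.rpow_add hGpos, Real.rpow_one]
  have hstep : κ ^ a * (G ^ (((p : ℝ) + 1 - q) / q) * G) / ζ ≤ f_k - f_k1 := by
    rw [← hsplit]
    calc (κ * G) ^ a / ζ ≤ D ^ (p + 1) / ζ := by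
          exact div_le_div_of_nonneg_right key hζ.le |>.trans_eq rfl
      _ ≤ f_k - f_k1 := hdec
  have : f_k1 - f_ref = G - (f_k - f_k1) := by rw [hG]; ring
  rw [this]
  have expand : (1 - κ ^ a / ζ * G ^ (((p : ℝ) + 1 - q) / q)) * G =
      G - κ ^ a * (G ^ (((p : ℝ) + 1 - q) / q) * G) / ζ := by
    field_simp
  rw [expand]
  linarith [hstep]
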